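/- arXiv:1004.0408 — 4 statements merged into one kernel-verified Lean document; each statement's English description precedes it below -/
import Mathlib

section
/- Let i ∈ ℕ and let (m_n) be a sequence of positive integers and (μ_n) a sequence in (0,∞) such that m_n → ∞, μ_n → 0 and m_n^γ·μ_n → C as n → ∞ for some constant C ∈ [0, b/(1−γ)). Then limsup_{n→∞} Σ_{k=0}^{m_n} k^i·w(k)·e^{μ_n·k} < ∞. -/
open Filter Topology

/-- Zero-range jump rates: `g 0 = 0`, `g n = 1 + b / n ^ γ` for `n ≥ 1`. -/
noncomputable def zrpG (b γ : ℝ) (n : ℕ) : ℝ := if n = 0 then 0 else 1 + b / (n : ℝ) ^ γ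

/-- Stationary weights: `w 0 = 1`, `w n = ∏_{k=1}^n 1 / g k`. -/
noncomputable def zrpW (b γ : ℝ) (n : ℕ) : ℝ := ∏ k ∈ Finset.Icc 1 n, (zrpG b γ k)⁻¹

/-- Single-site partition function `z φ = Σ_{k≥0} w k · φ^k`. -/
noncomputable def zrpZfun (b γ φ : ℝ) : ℝ := ∑' k : ℕ, zrpW b γ k * φ ^ k

/-- Critical density `ρ_c = (Σ k·w k) / z 1`. -/
noncomputable def zrpRhoC (b γ : ℝ) : ℝ :=
  (∑' k : ℕ, (k : ℝ) * zrpW b γ k) / (∑' k : ℕ, zrpW b γ k)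

/-- Critical variance `σ_c² = (Σ k²·w k) / z 1 − ρ_c²`. -/
noncomputable def zrpSigmaSq (b γ : ℝ) : ℝ :=
  (∑' k : ℕ, (k : ℝ) ^ 2 * zrpW b γ k) / (∑' k : ℕ, zrpW b γ k) - (zrpRhoC b γ) ^ 2

/-- Truncated partition function `z_m(φ) = Σ_{k=0}^m w k · φ^k`. -/
noncomputable def zrpZtrunc (b γ : ℝ) (m : ℕ) (φ : ℝ) : ℝ :=
  ∑ k ∈ Finset.range (m + 1), zrpW b γ k * φ ^ k

/-- Truncated density function `R_m(φ) = (Σ_{k=0}^m k·w k·φ^k) / z_m(φ)`. -/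
noncomputable def zrpRtrunc (b γ : ℝ) (m : ℕ) (φ : ℝ) : ℝ :=
  (∑ k ∈ Finset.range (m + 1), (k : ℝ) * zrpW b γ k * φ ^ k) / zrpZtrunc b γ m φ

/-- Canonical partition function `Z(L,N) = Σ_{η : Fin L → ℕ, Σ η = N} ∏ w (η x)`. -/
noncomputable def zrpZc (b γ : ℝ) (L N : ℕ) : ℝ :=
  ∑ η ∈ (Fintype.piFinset fun _ : Fin L => Finset.range (N + 1)).filter
      (fun η => ∑ x, η x = N),
    ∏ x, zrpW b γ (η x)

/-- Cut-off canonical partition function, restricting to `η x ≤ m` for all `x`. -/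
noncomputable def zrpQc (b γ : ℝ) (L N m : ℕ) : ℝ :=
  ∑ η ∈ (Fintype.piFinset fun _ : Fin L => Finset.range (N + 1)).filter
      (fun η => ∑ x, η x = N ∧ ∀ x, η x ≤ m),
    ∏ x, zrpW b γ (η x)

/-- Finite-size rate function `I_{L,N}(m)`. -/
noncomputable def zrpI (b γ : ℝ) (L N m : ℕ) : ℝ :=
  -(1 / (L : ℝ)) * Real.log ((zrpQc b γ L N m - zrpQc b γ L N (m - 1)) / zrpZc b γ L N)

private lemma zrp_rpow_diff_le (γ : ℝ) (hγ0 : 0 < γ) (hγ1 : γ < 1) {x : ℝ} (hx : 0 < x) :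
    (x + 1) ^ (1 - γ) - x ^ (1 - γ) ≤ (1 - γ) * x ^ (-γ) := by
  have hx1 : (0:ℝ) < x + 1 := by linarith
  have hgm := Real.geom_mean_le_arith_mean2_weighted hγ0.le (by linarith : (0:ℝ) ≤ 1 - γ)
    hx.le hx1.le (by ring)
  -- x ^ γ * (x+1) ^ (1-γ) ≤ γ * x + (1-γ) * (x+1)
  have h1 : (x + 1) ^ (1 - γ) = x ^ (-γ) * (x ^ γ * (x + 1) ^ (1 - γ)) := by
    rw [← mul_assoc, ← Real.rpow_add hx, neg_add_cancel, Real.rpow_zero, one_mul]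
  have h2 : x ^ (1 - γ) = x ^ (-γ) * x := by
    rw [show (1 - γ) = -γ + 1 by ring, Real.rpow_add hx, Real.rpow_one]
  have hp : (0:ℝ) < x ^ (-γ) := Real.rpow_pos_of_pos hx _
  have := mul_le_mul_of_nonneg_left hgm hp.le
  rw [h1, h2]
  nlinarith [this]

private lemma zrp_sum_rpow_neg_ge (γ : ℝ) (hγ0 : 0 < γ) (hγ1 : γ < 1) (k : ℕ) :
    ((k:ℝ) + 1) ^ (1 - γ) - 1 ≤ (1 - γ) * ∑ j ∈ Finset.Icc 1 k, (j:ℝ) ^ (-γ) := by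
  induction k with
  | zero => simp
  | succ k ih =>
      rw [Finset.sum_Icc_succ_top (by omega)]
      have h := zrp_rpow_diff_le γ hγ0 hγ1 (x := (k:ℝ) + 1) (by positivity)
      push_cast
      push_cast at ih
      nlinarith [h, ih]

private lemma zrpG_ge_one (b γ : ℝ) (hb : 0 < b) {j : ℕ} (hj : 1 ≤ j) : 1 ≤ zrpG b γ j := by
  have hjpos : (0:ℝ) < j := by exact_mod_cast hj
  have h : 0 < b / (j:ℝ) ^ γ := div_pos hb (Real.rpow_pos_of_pos hjpos γ)
  simp only [zrpG, if_neg (Nat.one_le_iff_ne_zero.mp hj)]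
  linarith

private lemma zrpW_nonneg (b γ : ℝ) (hb : 0 < b) (k : ℕ) : 0 ≤ zrpW b γ k :=
  Finset.prod_nonneg fun j hj => inv_nonneg.mpr
    (le_trans zero_le_one (zrpG_ge_one b γ hb (Finset.mem_Icc.mp hj).1))

private lemma zrpW_le_one (b γ : ℝ) (hb : 0 < b) (k : ℕ) : zrpW b γ k ≤ 1 :=
  Finset.prod_le_one
    (fun j hj => inv_nonneg.mpr
      (le_trans zero_le_one (zrpG_ge_one b γ hb (Finset.mem_Icc.mp hj).1)))
    (fun j hj => inv_le_one_of_one_le₀ (zrpG_ge_one b γ hb (Finset.mem_Icc.mp hj).1))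

/-- If `m_n → ∞`, `μ_n → 0`, `μ_n > 0` and `m_n^γ · μ_n → C` with
`0 ≤ C < b/(1−γ)`, then `limsup_n Σ_{k=0}^{m_n} k^i · w(k) · e^{μ_n k} < ∞`. -/
theorem truncated_moments_bounded (b γ : ℝ) (hγ0 : 0 < γ) (hγ1 : γ < 1) (hb : 0 < b)
    (i : ℕ) (m : ℕ → ℕ) (μ : ℕ → ℝ) (C : ℝ)
    (hmpos : ∀ n, 0 < m n) (hμpos : ∀ n, 0 < μ n)
    (hm : Tendsto m atTop atTop) (hμ : Tendsto μ atTop (nhds 0))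
    (hC : Tendsto (fun n => (m n : ℝ) ^ γ * μ n) atTop (nhds C))
    (hC0 : 0 ≤ C) (hCb : C < b / (1 - γ)) :
    Filter.limsup
      (fun n => ((∑ k ∈ Finset.range (m n + 1),
        (k : ℝ) ^ i * zrpW b γ k * Real.exp (μ n * k) : ℝ) : EReal)) atTop < ⊤ := by
  have h1γ : (0:ℝ) < 1 - γ := by linarith
  set θ : ℝ := (C + b / (1 - γ)) / 2 with hθdef
  have hθC : C < θ := by rw [hθdef]; linarith
  have hθlt : θ < b / (1 - γ) := by rw [hθdef]; linarith
  have hθ0 : 0 < θ := lt_of_le_of_lt hC0 hθC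
  have hθb : θ * (1 - γ) < b := by
    calc θ * (1 - γ) < (b / (1 - γ)) * (1 - γ) := by
          exact mul_lt_mul_of_pos_right hθlt h1γ
      _ = b := by field_simp
  set b' : ℝ := (θ * (1 - γ) + b) / 2 with hb'def
  have hb'0 : 0 < b' := by rw [hb'def]; nlinarith
  have hb'b : b' < b := by rw [hb'def]; linarith
  have hθb' : θ * (1 - γ) < b' := by rw [hb'def]; linarith
  set ε : ℝ := b' / (1 - γ) - θ with hεdef
  have hε : 0 < ε := by
    rw [hεdef]
    have := (lt_div_iff₀ h1γ).mpr hθb'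
    linarith
  -- choose J such that the per-site bound holds
  have htnd : Tendsto (fun j : ℕ => (j:ℝ) ^ (-γ)) atTop (nhds 0) :=
    (tendsto_rpow_neg_atTop hγ0).comp tendsto_natCast_atTop_atTop
  set c : ℝ := min ((b - b') / (b * b')) (1 / (2 * b')) with hcdef
  have hc : 0 < c := lt_min (div_pos (by linarith) (by positivity)) (by positivity)
  obtain ⟨J, hJ⟩ := Filter.eventually_atTop.mp (htnd.eventually (gt_mem_nhds hc))
  have hgbound : ∀ j : ℕ, J ≤ j → 1 ≤ j →
      (zrpG b γ j)⁻¹ ≤ Real.exp (-(b' * (j:ℝ) ^ (-γ))) := by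
    intro j hJj hj1
    have ht : (j:ℝ) ^ (-γ) ≤ c := (hJ j hJj).le
    set t := (j:ℝ) ^ (-γ) with htdef
    have ht0 : 0 ≤ t := Real.rpow_nonneg (Nat.cast_nonneg j) _
    have ht1 : b' * t ≤ 1 / 2 := by
      have h := le_trans ht (min_le_right _ _)
      rw [le_div_iff₀ (by positivity : (0:ℝ) < 2 * b')] at h
      nlinarith
    have ht2 : b * b' * t ≤ b - b' := by
      have h := le_trans ht (min_le_left _ _)
      rw [le_div_iff₀ (by positivity : (0:ℝ) < b * b')] at h
      linarith
    have hg : zrpG b γ j = 1 + b * t := by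
      simp only [zrpG, if_neg (Nat.one_le_iff_ne_zero.mp hj1)]
      rw [htdef, Real.rpow_neg (Nat.cast_nonneg j)]
      ring
    have h4 : (0:ℝ) < 1 - b' * t := by linarith
    have hbt0 : (0:ℝ) < 1 + b * t := by nlinarith
    have h3 : 1 - b' * t ≤ Real.exp (-(b' * t)) := by
      linarith [Real.add_one_le_exp (-(b' * t))]
    have key : 1 ≤ (1 - b' * t) * (1 + b * t) := by nlinarith [mul_le_mul_of_nonneg_right ht2 ht0]
    have h5 : (1 - b' * t)⁻¹ ≤ 1 + b * t := by
      have h6 := mul_le_mul_of_nonneg_left key (inv_nonneg.mpr h4.le)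
      rwa [mul_one, ← mul_assoc, inv_mul_cancel₀ h4.ne', one_mul] at h6
    have h7 : Real.exp (b' * t) ≤ 1 + b * t := by
      have h8 : (Real.exp (-(b' * t)))⁻¹ ≤ (1 - b' * t)⁻¹ := inv_anti₀ h4 h3
      rw [Real.exp_neg, inv_inv] at h8
      linarith
    rw [hg, Real.exp_neg]
    exact inv_anti₀ (Real.exp_pos _) h7
  -- partial sums of j^{-γ}
  set S : ℕ → ℝ := fun k => ∑ j ∈ Finset.Icc 1 k, (j:ℝ) ^ (-γ) with hSdef
  have hSnonneg : ∀ k, 0 ≤ S k := fun k =>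
    Finset.sum_nonneg fun j _ => Real.rpow_nonneg (Nat.cast_nonneg j) _
  have hSmono : ∀ {k l : ℕ}, k ≤ l → S k ≤ S l := fun {k l} h =>
    Finset.sum_le_sum_of_subset_of_nonneg (Finset.Icc_subset_Icc_right h)
      (fun j _ _ => Real.rpow_nonneg (Nat.cast_nonneg j) _)
  set A : ℝ := Real.exp (b' * S J) with hAdef
  have hA0 : 0 < A := Real.exp_pos _
  have hwkey : ∀ k, zrpW b γ k * Real.exp (b' * S k) ≤ A := by
    intro k
    induction k with
    | zero =>
        have hw0 : zrpW b γ 0 = 1 := by simp [zrpW]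
        have hS0 : S 0 = 0 := by simp [hSdef]
        rw [hw0, hS0, mul_zero, Real.exp_zero, mul_one, hAdef]
        exact Real.one_le_exp (mul_nonneg hb'0.le (hSnonneg J))
    | succ k ih =>
        have hw : zrpW b γ (k+1) = zrpW b γ k * (zrpG b γ (k+1))⁻¹ := by
          rw [zrpW, zrpW, Finset.prod_Icc_succ_top (by omega)]
        have hSk : S (k+1) = S k + ((k+1:ℕ):ℝ) ^ (-γ) := by
          rw [hSdef]
          exact Finset.sum_Icc_succ_top (by omega) _
        by_cases hcase : J ≤ k + 1
        · have hg := hgbound (k+1) hcase (by omega)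
          have hfac : (zrpG b γ (k+1))⁻¹ * Real.exp (b' * ((k+1:ℕ):ℝ) ^ (-γ)) ≤ 1 := by
            calc (zrpG b γ (k+1))⁻¹ * Real.exp (b' * ((k+1:ℕ):ℝ) ^ (-γ))
                ≤ Real.exp (-(b' * ((k+1:ℕ):ℝ) ^ (-γ))) * Real.exp (b' * ((k+1:ℕ):ℝ) ^ (-γ)) :=
                  mul_le_mul_of_nonneg_right hg (Real.exp_pos _).le
              _ = 1 := by rw [← Real.exp_add]; simp
          calc zrpW b γ (k+1) * Real.exp (b' * S (k+1))
              = (zrpW b γ k * Real.exp (b' * S k)) *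
                ((zrpG b γ (k+1))⁻¹ * Real.exp (b' * ((k+1:ℕ):ℝ) ^ (-γ))) := by
                rw [hw, hSk, mul_add, Real.exp_add]; ring
            _ ≤ (zrpW b γ k * Real.exp (b' * S k)) * 1 :=
                mul_le_mul_of_nonneg_left hfac
                  (mul_nonneg (zrpW_nonneg b γ hb k) (Real.exp_pos _).le)
            _ = zrpW b γ k * Real.exp (b' * S k) := mul_one _
            _ ≤ A := ih
        · have h1 : zrpW b γ (k+1) ≤ 1 := zrpW_le_one b γ hb (k+1)
          have h2 : S (k+1) ≤ S J := hSmono (by omega)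
          calc zrpW b γ (k+1) * Real.exp (b' * S (k+1))
              ≤ 1 * Real.exp (b' * S (k+1)) :=
                mul_le_mul_of_nonneg_right h1 (Real.exp_pos _).le
            _ ≤ A := by
                rw [one_mul, hAdef]
                exact Real.exp_le_exp.mpr (mul_le_mul_of_nonneg_left h2 hb'0.le)
  set A' : ℝ := A * Real.exp (b' / (1 - γ)) with hA'def
  have hA'0 : 0 < A' := mul_pos hA0 (Real.exp_pos _)
  have hwbound : ∀ k : ℕ, zrpW b γ k ≤ A' * Real.exp (-(b' / (1 - γ)) * (k:ℝ) ^ (1 - γ)) := by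
    intro k
    have h1 : zrpW b γ k ≤ A * Real.exp (-(b' * S k)) := by
      have h2 : zrpW b γ k = zrpW b γ k * Real.exp (b' * S k) * Real.exp (-(b' * S k)) := by
        rw [mul_assoc, ← Real.exp_add]; simp
      rw [h2]
      exact mul_le_mul_of_nonneg_right (hwkey k) (Real.exp_pos _).le
    refine h1.trans ?_
    have hsum := zrp_sum_rpow_neg_ge γ hγ0 hγ1 k
    have hk1 : (k:ℝ) ^ (1 - γ) ≤ ((k:ℝ) + 1) ^ (1 - γ) :=
      Real.rpow_le_rpow (Nat.cast_nonneg k) (by linarith) h1γ.le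
    have hSk : (k:ℝ) ^ (1 - γ) - 1 ≤ (1 - γ) * S k := by
      rw [hSdef]; dsimp only; linarith
    have hkey : -(b' * S k) ≤ b' / (1 - γ) + (-(b' / (1 - γ)) * (k:ℝ) ^ (1 - γ)) := by
      have hmul := mul_le_mul_of_nonneg_left hSk (le_of_lt (div_pos hb'0 h1γ))
      have heq : (b' / (1 - γ)) * ((1 - γ) * S k) = b' * S k := by
        field_simp
      rw [heq] at hmul
      linarith [hmul]
    calc A * Real.exp (-(b' * S k))
        ≤ A * Real.exp (b' / (1 - γ) + (-(b' / (1 - γ)) * (k:ℝ) ^ (1 - γ))) :=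
          mul_le_mul_of_nonneg_left (Real.exp_le_exp.mpr hkey) hA0.le
      _ = A' * Real.exp (-(b' / (1 - γ)) * (k:ℝ) ^ (1 - γ)) := by
          rw [hA'def, Real.exp_add]; ring
  -- the dominating summable sequence
  set t : ℕ → ℝ := fun k => (k:ℝ) ^ i * Real.exp (-ε * (k:ℝ) ^ (1 - γ)) with htdef
  have ht0 : ∀ k, 0 ≤ t k := fun k =>
    mul_nonneg (pow_nonneg (Nat.cast_nonneg k) i) (Real.exp_pos _).le
  have hts : Summable t := by
    have hcomp : Tendsto (fun k : ℕ => (k:ℝ) ^ (1 - γ)) atTop atTop :=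
      (tendsto_rpow_atTop h1γ).comp tendsto_natCast_atTop_atTop
    have h0 := (tendsto_rpow_mul_exp_neg_mul_atTop_nhds_zero (((i:ℝ) + 2) / (1 - γ)) ε hε).comp
      hcomp
    have hev : ∀ᶠ k : ℕ in atTop,
        ((k:ℝ) ^ (1 - γ)) ^ (((i:ℝ) + 2) / (1 - γ)) * Real.exp (-ε * (k:ℝ) ^ (1 - γ)) ≤ 1 :=
      h0.eventually (ge_mem_nhds (by norm_num : (0:ℝ) < 1))
    apply summable_of_isBigO_nat (Real.summable_one_div_nat_pow.mpr (by norm_num : 1 < 2))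
    rw [Asymptotics.isBigO_iff]
    refine ⟨1, ?_⟩
    filter_upwards [hev, eventually_ge_atTop 1] with k hk hk1
    have hkpos : (0:ℝ) < k := by exact_mod_cast hk1
    have hs : ((k:ℝ) ^ (1 - γ)) ^ (((i:ℝ) + 2) / (1 - γ)) = (k:ℝ) ^ (i + 2) := by
      rw [← Real.rpow_natCast (k:ℝ) (i + 2), ← Real.rpow_mul (Nat.cast_nonneg k)]
      congr 1
      push_cast
      field_simp
    rw [hs] at hk
    have h2 : Real.exp (-ε * (k:ℝ) ^ (1 - γ)) ≤ 1 / (k:ℝ) ^ (i + 2) := by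
      rw [le_div_iff₀ (by positivity : (0:ℝ) < (k:ℝ) ^ (i + 2)), mul_comm]
      exact hk
    rw [Real.norm_eq_abs, Real.norm_eq_abs, abs_of_nonneg (ht0 k),
      abs_of_nonneg (by positivity : (0:ℝ) ≤ 1 / (k:ℝ) ^ 2), one_mul]
    calc t k ≤ (k:ℝ) ^ i * (1 / (k:ℝ) ^ (i + 2)) :=
          mul_le_mul_of_nonneg_left h2 (by positivity)
      _ = 1 / (k:ℝ) ^ 2 := by
          rw [pow_add]
          field_simp
  set SS : ℝ := A' * ∑' k, t k with hSSdef
  -- eventual bound on the truncated sums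
  have hev2 : ∀ᶠ n in atTop, (m n : ℝ) ^ γ * μ n ≤ θ :=
    (hC.eventually (ge_mem_nhds hθC)).mono fun n hn => hn
  have hfinal : ∀ᶠ n in atTop,
      (∑ k ∈ Finset.range (m n + 1),
        (k : ℝ) ^ i * zrpW b γ k * Real.exp (μ n * k)) ≤ SS := by
    filter_upwards [hev2] with n hn
    have hterm : ∀ k ∈ Finset.range (m n + 1),
        (k : ℝ) ^ i * zrpW b γ k * Real.exp (μ n * k) ≤ A' * t k := by
      intro k hk
      have hkm : k ≤ m n := Nat.lt_succ_iff.mp (Finset.mem_range.mp hk)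
      have hμk : μ n * (k:ℝ) ≤ θ * (k:ℝ) ^ (1 - γ) := by
        rcases Nat.eq_zero_or_pos k with rfl | hkpos
        · simp [Real.zero_rpow h1γ.ne']
        · have hk0 : (0:ℝ) < k := by exact_mod_cast hkpos
          have hsplit : (k:ℝ) = (k:ℝ) ^ γ * (k:ℝ) ^ (1 - γ) := by
            rw [← Real.rpow_add hk0]
            norm_num
          have h1 : μ n * (k:ℝ) ^ γ ≤ θ := by
            have h2 : (k:ℝ) ^ γ ≤ (m n : ℝ) ^ γ :=
              Real.rpow_le_rpow hk0.le (by exact_mod_cast hkm) hγ0.le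
            calc μ n * (k:ℝ) ^ γ ≤ μ n * (m n : ℝ) ^ γ :=
                  mul_le_mul_of_nonneg_left h2 (hμpos n).le
              _ = (m n : ℝ) ^ γ * μ n := mul_comm _ _
              _ ≤ θ := hn
          calc μ n * (k:ℝ) = (μ n * (k:ℝ) ^ γ) * (k:ℝ) ^ (1 - γ) := by
                rw [mul_assoc, ← hsplit]
            _ ≤ θ * (k:ℝ) ^ (1 - γ) :=
                mul_le_mul_of_nonneg_right h1 (Real.rpow_nonneg hk0.le _)
      calc (k : ℝ) ^ i * zrpW b γ k * Real.exp (μ n * k)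
          ≤ (k : ℝ) ^ i * (A' * Real.exp (-(b' / (1 - γ)) * (k:ℝ) ^ (1 - γ))) *
              Real.exp (θ * (k:ℝ) ^ (1 - γ)) := by
            apply mul_le_mul (mul_le_mul_of_nonneg_left (hwbound k) (by positivity))
              (Real.exp_le_exp.mpr hμk) (Real.exp_pos _).le (by positivity)
        _ = A' * ((k:ℝ) ^ i * (Real.exp (-(b' / (1 - γ)) * (k:ℝ) ^ (1 - γ)) *
              Real.exp (θ * (k:ℝ) ^ (1 - γ)))) := by ring
        _ = A' * t k := by
            rw [htdef]
            dsimp only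
            rw [← Real.exp_add]
            congr 2
            rw [hεdef]
            ring
    calc ∑ k ∈ Finset.range (m n + 1), (k : ℝ) ^ i * zrpW b γ k * Real.exp (μ n * k)
        ≤ ∑ k ∈ Finset.range (m n + 1), A' * t k := Finset.sum_le_sum hterm
      _ = A' * ∑ k ∈ Finset.range (m n + 1), t k := by rw [Finset.mul_sum]
      _ ≤ A' * ∑' k, t k :=
          mul_le_mul_of_nonneg_left (Summable.sum_le_tsum _ (fun k _ => ht0 k) hts) hA'0.le
      _ = SS := hSSdef.symm
  have hlim : Filter.limsup
      (fun n => ((∑ k ∈ Finset.range (m n + 1),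
        (k : ℝ) ^ i * zrpW b γ k * Real.exp (μ n * k) : ℝ) : EReal)) atTop ≤ (SS : EReal) := by
    refine Filter.limsup_le_of_le (by isBoundedDefault) ?_
    filter_upwards [hfinal] with n hn
    exact_mod_cast hn
  exact lt_of_le_of_lt hlim (EReal.coe_lt_top SS)
end

section
/- Let i ∈ ℕ and for j ∈ ℕ set M_j = (Σ_{k=0}^∞ k^j·w(k))/z(1) (all finite). Let (m_n) be a sequence of positive integers and (μ_n) a sequence in (0,∞) such that m_n → ∞, μ_n → 0 and m_n^γ·μ_n → C for some C ∈ (0, b/(1−γ)). Then the i-th moment of the cut-off measure ν_{e^{μ_n},m_n} admits the first-order expansion ( (Σ_{k=0}^{m_n} k^i·w(k)·e^{μ_n k}) / z_{m_n}(e^{μ_n}) − M_i − μ_n·(M_{i+1} − M_i·M_1) ) / μ_n → 0 as n → ∞. -/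
open Filter Topology

lemma zrp11_g_one_le {b γ : ℝ} (hb : 0 < b) {k : ℕ} (hk : k ≠ 0) : 1 ≤ zrpG b γ k := by
  rw [zrpG, if_neg hk]
  have : (0:ℝ) < (k:ℝ) ^ γ :=
    Real.rpow_pos_of_pos (by exact_mod_cast Nat.pos_of_ne_zero hk) _
  have := div_pos hb this
  linarith

lemma zrp11_w_pos {b γ : ℝ} (hb : 0 < b) (n : ℕ) : 0 < zrpW b γ n := by
  refine Finset.prod_pos fun k hk => ?_
  have hk0 : k ≠ 0 := by have := (Finset.mem_Icc.1 hk).1; omega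
  exact inv_pos.2 (lt_of_lt_of_le one_pos (zrp11_g_one_le hb hk0))

lemma zrp11_w_le_one {b γ : ℝ} (hb : 0 < b) (n : ℕ) : zrpW b γ n ≤ 1 := by
  refine Finset.prod_le_one (fun k hk => ?_) (fun k hk => ?_)
  · have hk0 : k ≠ 0 := by have := (Finset.mem_Icc.1 hk).1; omega
    exact le_of_lt (inv_pos.2 (lt_of_lt_of_le one_pos (zrp11_g_one_le hb hk0)))
  · have hk0 : k ≠ 0 := by have := (Finset.mem_Icc.1 hk).1; omega
    exact inv_le_one_of_one_le₀ (zrp11_g_one_le hb hk0)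

lemma zrp11_step {γ : ℝ} (hγ0 : 0 < γ) (hγ1 : γ < 1) {x : ℝ} (hx : 1 ≤ x) :
    (x + 1) ^ (1 - γ) ≤ x ^ (1 - γ) + (1 - γ) * x ^ (-γ) := by
  have hx0 : (0:ℝ) < x := lt_of_lt_of_le one_pos hx
  have h1 : x + 1 = x * (1 + 1 / x) := by field_simp
  have h2 : (x + 1) ^ (1 - γ) = x ^ (1 - γ) * (1 + 1 / x) ^ (1 - γ) := by
    rw [h1, Real.mul_rpow hx0.le (by positivity)]
  have h3 : (1 + 1 / x) ^ (1 - γ) ≤ 1 + (1 - γ) * (1 / x) :=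
    rpow_one_add_le_one_add_mul_self (by nlinarith [one_div_pos.2 hx0]) (by linarith) (by linarith)
  have h4 : x ^ (1 - γ) * (1 / x) = x ^ (-γ) := by
    rw [one_div, ← Real.rpow_neg_one x, ← Real.rpow_add hx0]
    ring_nf
  calc (x + 1) ^ (1 - γ) = x ^ (1 - γ) * (1 + 1 / x) ^ (1 - γ) := h2
    _ ≤ x ^ (1 - γ) * (1 + (1 - γ) * (1 / x)) := by
        apply mul_le_mul_of_nonneg_left h3 (Real.rpow_nonneg hx0.le _)
    _ = x ^ (1 - γ) + (1 - γ) * (x ^ (1 - γ) * (1 / x)) := by ring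
    _ = x ^ (1 - γ) + (1 - γ) * x ^ (-γ) := by rw [h4]

lemma zrp11_sum_ge {γ : ℝ} (hγ0 : 0 < γ) (hγ1 : γ < 1) (K : ℕ) (hK : 1 ≤ K) :
    ∀ n : ℕ, (((n:ℝ) + 1) ^ (1 - γ) - (K:ℝ) ^ (1 - γ)) / (1 - γ)
      ≤ ∑ k ∈ Finset.Icc K n, (k:ℝ) ^ (-γ) := by
  have hγ' : (0:ℝ) < 1 - γ := by linarith
  intro n
  induction n with
  | zero =>
    rw [show Finset.Icc K 0 = ∅ by simp [Finset.Icc_eq_empty_iff]; omega, Finset.sum_empty]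
    apply div_nonpos_of_nonpos_of_nonneg _ hγ'.le
    have h1 : (1:ℝ) ≤ (K:ℝ) := by exact_mod_cast hK
    have h2 := Real.rpow_le_rpow (by norm_num) h1 hγ'.le
    rw [Real.one_rpow] at h2
    have h3 : (((0:ℕ):ℝ) + 1) ^ (1 - γ) = 1 := by norm_num
    rw [h3]; linarith
  | succ n ih =>
    by_cases hKn : K ≤ n + 1
    · rw [Finset.sum_Icc_succ_top hKn]
      have hstep := zrp11_step hγ0 hγ1 (x := (n:ℝ) + 1) (by norm_num)
      have h1 : ((n:ℝ) + 1 + 1) ^ (1 - γ) - ((n:ℝ) + 1) ^ (1 - γ)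
          ≤ (1 - γ) * ((n:ℝ) + 1) ^ (-γ) := by linarith
      rw [div_le_iff₀ hγ'] at ih ⊢
      push_cast
      nlinarith [ih]
    · have hE : Finset.Icc K (n+1) = ∅ := by simp [Finset.Icc_eq_empty_iff]; omega
      rw [hE, Finset.sum_empty]
      apply div_nonpos_of_nonpos_of_nonneg _ hγ'.le
      have : ((n:ℝ) + 1) + 1 ≤ (K:ℝ) := by exact_mod_cast by omega
      have := Real.rpow_le_rpow (by positivity) this hγ'.le
      push_cast
      linarith
/-- pointwise: exp(β * k^{-γ}) ≤ 1 + b/k^γ when b/k^γ ≤ (b-β)/b -/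
lemma zrp11_exp_le_g {b γ β : ℝ} (hb : 0 < b) (hβ0 : 0 < β) (hβb : β < b)
    {k : ℕ} (hk : k ≠ 0) (hsmall : b / (k:ℝ) ^ γ ≤ (b - β) / b) :
    Real.exp (β * (k:ℝ) ^ (-γ)) ≤ zrpG b γ k := by
  have hkpos : (0:ℝ) < (k:ℝ) ^ γ :=
    Real.rpow_pos_of_pos (by exact_mod_cast Nat.pos_of_ne_zero hk) _
  set x : ℝ := b / (k:ℝ) ^ γ with hxdef
  have hx0 : 0 < x := div_pos hb hkpos
  have hkneg : (k:ℝ) ^ (-γ) = x / b := by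
    rw [Real.rpow_neg (by positivity), hxdef]
    field_simp
  rw [zrpG, if_neg hk, hkneg, ← hxdef]
  -- β * (x/b) ≤ x - x^2  since  x ≤ (b-β)/b
  have h1 : β * (x / b) ≤ x - x ^ 2 := by
    have hxb : x * b ≤ b - β := by rw [← le_div_iff₀ hb]; exact hsmall
    rw [mul_div_assoc', div_le_iff₀ hb]
    nlinarith [hx0.le, mul_nonneg hx0.le (sub_nonneg.2 hxb)]
  have h2 : Real.exp (x - x ^ 2) ≤ 1 + x := by
    have hy : 1 - (x - x ^ 2) > 0 := by nlinarith
    have h3 : 1 - (x - x ^ 2) ≤ Real.exp (-(x - x ^ 2)) := by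
      have := Real.add_one_le_exp (-(x - x ^ 2)); linarith
    have h4 : Real.exp (x - x ^ 2) * Real.exp (-(x - x ^ 2)) = 1 := by
      rw [← Real.exp_add]; simp
    nlinarith [Real.exp_pos (x - x ^ 2), mul_le_mul_of_nonneg_left h3 (Real.exp_pos (x - x^2)).le]
  exact le_trans (Real.exp_le_exp.2 h1) h2

lemma zrp11_w_bound {b γ : ℝ} (hγ0 : 0 < γ) (hγ1 : γ < 1) (hb : 0 < b) {β : ℝ}
    (hβ0 : 0 < β) (hβb : β < b) :
    ∃ B : ℝ, 0 < B ∧ ∀ n : ℕ, zrpW b γ n ≤ B * Real.exp (-(β / (1 - γ)) * (n:ℝ) ^ (1 - γ)) := by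
  have hγ' : (0:ℝ) < 1 - γ := by linarith
  -- choose K
  obtain ⟨K₀, hK₀⟩ := exists_nat_ge ((b * b / (b - β)) ^ (1/γ))
  set K := max K₀ 1 with hKdef
  have hK1 : 1 ≤ K := le_max_right _ _
  have hKsmall : ∀ k : ℕ, K ≤ k → b / (k:ℝ) ^ γ ≤ (b - β) / b := by
    intro k hk
    have hkR : ((b * b / (b - β)) ^ (1/γ) : ℝ) ≤ (k:ℝ) := by
      have : (K₀:ℝ) ≤ (k:ℝ) := by exact_mod_cast le_trans (le_max_left _ _) hk
      linarith
    have hbβ : (0:ℝ) < b - β := by linarith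
    have hbase0 : (0:ℝ) ≤ b * b / (b - β) := by positivity
    have hbase : (0:ℝ) ≤ (b * b / (b - β)) ^ (1/γ) := Real.rpow_nonneg hbase0 _
    have := Real.rpow_le_rpow hbase hkR hγ0.le
    rw [← Real.rpow_mul hbase0, one_div, inv_mul_cancel₀ (ne_of_gt hγ0),
      Real.rpow_one] at this
    have hkpos : (0:ℝ) < (k:ℝ) ^ γ := by
      have : (1:ℕ) ≤ k := le_trans hK1 hk
      exact Real.rpow_pos_of_pos (by exact_mod_cast this) _
    rw [div_le_div_iff₀ hkpos hb]
    have h5 := mul_le_mul_of_nonneg_left this hbβ.le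
    have h6 : (b - β) * (b * b / (b - β)) = b * b := by field_simp
    linarith
  refine ⟨Real.exp (β / (1 - γ) * (K:ℝ) ^ (1 - γ)), Real.exp_pos _, fun n => ?_⟩
  rcases lt_or_ge n K with hn | hn
  · calc zrpW b γ n ≤ 1 := zrp11_w_le_one hb n
      _ ≤ Real.exp (β / (1 - γ) * (K:ℝ) ^ (1 - γ)) *
          Real.exp (-(β / (1 - γ)) * (n:ℝ) ^ (1 - γ)) := by
        rw [← Real.exp_add]
        apply Real.one_le_exp
        have : ((n:ℝ)) ^ (1 - γ) ≤ (K:ℝ) ^ (1 - γ) :=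
          Real.rpow_le_rpow (by positivity) (by exact_mod_cast hn.le) hγ'.le
        have hb' : 0 < β / (1 - γ) := by positivity
        nlinarith
  · -- split product
    have hsplit : zrpW b γ n = (∏ k ∈ Finset.Ioc 0 (K-1), (zrpG b γ k)⁻¹) *
        ∏ k ∈ Finset.Ioc (K-1) n, (zrpG b γ k)⁻¹ := by
      rw [zrpW, show Finset.Icc 1 n = Finset.Ioc 0 n from Finset.Icc_add_one_left_eq_Ioc 0 n]
      exact (Finset.prod_Ioc_consecutive _ (Nat.zero_le _) (by omega)).symm
    have hIoc : Finset.Ioc (K-1) n = Finset.Icc K n := by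
      ext k; simp only [Finset.mem_Ioc, Finset.mem_Icc]; omega
    have hfirst : (∏ k ∈ Finset.Ioc 0 (K-1), (zrpG b γ k)⁻¹) ≤ 1 := by
      have : (∏ k ∈ Finset.Ioc 0 (K-1), (zrpG b γ k)⁻¹) = zrpW b γ (K-1) := by
        rw [zrpW, show Finset.Icc 1 (K-1) = Finset.Ioc 0 (K-1) from Finset.Icc_add_one_left_eq_Ioc 0 (K-1)]
      rw [this]; exact zrp11_w_le_one hb _
    have hsecond : (∏ k ∈ Finset.Icc K n, (zrpG b γ k)⁻¹)
        ≤ ∏ k ∈ Finset.Icc K n, Real.exp (-(β * (k:ℝ) ^ (-γ))) := by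
      apply Finset.prod_le_prod
      · intro k hk
        have hk0 : k ≠ 0 := by have := (Finset.mem_Icc.1 hk).1; omega
        exact le_of_lt (inv_pos.2 (lt_of_lt_of_le one_pos (zrp11_g_one_le hb hk0)))
      · intro k hk
        have hk0 : k ≠ 0 := by have h := (Finset.mem_Icc.1 hk).1; omega
        have := zrp11_exp_le_g hb hβ0 hβb hk0 (hKsmall k (Finset.mem_Icc.1 hk).1)
        rw [Real.exp_neg]
        exact inv_anti₀ (Real.exp_pos _) this
    have hprodexp : (∏ k ∈ Finset.Icc K n, Real.exp (-(β * (k:ℝ) ^ (-γ))))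
        = Real.exp (-(β * ∑ k ∈ Finset.Icc K n, (k:ℝ) ^ (-γ))) := by
      rw [← Real.exp_sum]
      congr 1
      rw [Finset.mul_sum, ← Finset.sum_neg_distrib]
    have hsum := zrp11_sum_ge hγ0 hγ1 K hK1 n
    have hexp : Real.exp (-(β * ∑ k ∈ Finset.Icc K n, (k:ℝ) ^ (-γ)))
        ≤ Real.exp (β / (1 - γ) * (K:ℝ) ^ (1 - γ)) *
          Real.exp (-(β / (1 - γ)) * (n:ℝ) ^ (1 - γ)) := by
      rw [← Real.exp_add]
      apply Real.exp_le_exp.2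
      have hmono : (n:ℝ) ^ (1 - γ) ≤ ((n:ℝ) + 1) ^ (1 - γ) :=
        Real.rpow_le_rpow (by positivity) (by linarith) hγ'.le
      rw [div_le_iff₀ hγ'] at hsum
      have h6 := mul_le_mul_of_nonneg_left hsum (show (0:ℝ) ≤ β / (1 - γ) by positivity)
      have h7 : β / (1 - γ) * ((∑ k ∈ Finset.Icc K n, (k:ℝ) ^ (-γ)) * (1 - γ))
          = β * ∑ k ∈ Finset.Icc K n, (k:ℝ) ^ (-γ) := by
        field_simp
      have h8 := mul_le_mul_of_nonneg_left hmono (show (0:ℝ) ≤ β / (1 - γ) by positivity)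
      nlinarith [h6, h7, h8]
    calc zrpW b γ n = _ := hsplit
      _ ≤ ∏ k ∈ Finset.Ioc (K-1) n, (zrpG b γ k)⁻¹ := by
          exact mul_le_of_le_one_left (Finset.prod_nonneg fun k hk => le_of_lt (inv_pos.2 (lt_of_lt_of_le one_pos
            (zrp11_g_one_le hb (by have := (Finset.mem_Ioc.1 hk).1; omega))))) hfirst
      _ = ∏ k ∈ Finset.Icc K n, (zrpG b γ k)⁻¹ := by rw [hIoc]
      _ ≤ _ := le_trans (le_trans hsecond (le_of_eq hprodexp)) hexp
lemma zrp11_tendsto_rpow_exp {γ : ℝ} (hγ1 : γ < 1) (s : ℝ) {c : ℝ} (hc : 0 < c) :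
    Tendsto (fun x : ℝ => x ^ s * Real.exp (-(c * x ^ (1 - γ)))) atTop (nhds 0) := by
  have hγ' : (0:ℝ) < 1 - γ := by linarith
  have h1 : Tendsto (fun y : ℝ => y ^ (s / (1 - γ)) * Real.exp (-c * y)) atTop (nhds 0) :=
    tendsto_rpow_mul_exp_neg_mul_atTop_nhds_zero _ _ hc
  have h2 : Tendsto (fun x : ℝ => x ^ (1 - γ)) atTop atTop := tendsto_rpow_atTop hγ'
  have h3 := h1.comp h2
  apply h3.congr'
  filter_upwards [eventually_gt_atTop (0:ℝ)] with x hx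
  simp only [Function.comp_apply]
  rw [← Real.rpow_mul hx.le, show (1 - γ) * (s / (1 - γ)) = s by field_simp, neg_mul]

set_option maxHeartbeats 1000000 in
lemma zrp11_summable {γ : ℝ} (hγ0 : 0 < γ) (hγ1 : γ < 1) (p : ℕ) {c : ℝ} (hc : 0 < c) :
    Summable (fun k : ℕ => (k:ℝ) ^ p * Real.exp (-(c * (k:ℝ) ^ (1 - γ)))) := by
  have hT : Tendsto (fun k : ℕ => (k:ℝ) ^ (((p:ℝ)) + 2) * Real.exp (-(c * (k:ℝ) ^ (1 - γ))))
      atTop (nhds 0) :=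
    (zrp11_tendsto_rpow_exp hγ1 ((p:ℝ) + 2) hc).comp tendsto_natCast_atTop_atTop
  have hev : ∀ᶠ k : ℕ in atTop, (k:ℝ) ^ p * Real.exp (-(c * (k:ℝ) ^ (1 - γ))) ≤ ((k:ℝ) ^ 2)⁻¹ := by
    filter_upwards [hT.eventually (eventually_le_nhds (show (0:ℝ) < 1 by norm_num)),
      eventually_ge_atTop 1] with k hk hk1
    have hk0 : (0:ℝ) < (k:ℝ) := by exact_mod_cast hk1
    have hcast : (k:ℝ) ^ (((p:ℝ)) + 2) = (k:ℝ) ^ p * (k:ℝ) ^ 2 := by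
      rw [show ((p:ℝ) + 2) = ((p + 2 : ℕ) : ℝ) by push_cast; ring, Real.rpow_natCast]
      ring
    rw [hcast] at hk
    calc (k:ℝ) ^ p * Real.exp (-(c * (k:ℝ) ^ (1 - γ)))
        = (k:ℝ) ^ p * Real.exp (-(c * (k:ℝ) ^ (1 - γ))) * (k:ℝ) ^ 2 * ((k:ℝ) ^ 2)⁻¹ := by
          field_simp
      _ ≤ 1 * ((k:ℝ) ^ 2)⁻¹ := by
          apply mul_le_mul_of_nonneg_right _ (by positivity)
          calc (k:ℝ) ^ p * Real.exp (-(c * (k:ℝ) ^ (1 - γ))) * (k:ℝ) ^ 2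
              = (k:ℝ) ^ p * (k:ℝ) ^ 2 * Real.exp (-(c * (k:ℝ) ^ (1 - γ))) := by ring
            _ ≤ 1 := by
                have : ((k:ℝ) ^ p * (k:ℝ) ^ 2) * Real.exp (-(c * (k:ℝ) ^ (1 - γ))) ≤ 1 := hk
                linarith
      _ = ((k:ℝ) ^ 2)⁻¹ := one_mul _
  obtain ⟨N, hN⟩ := eventually_atTop.1 hev
  rw [← summable_nat_add_iff N]
  apply Summable.of_nonneg_of_le (fun k => by positivity) (fun k => hN (k + N) (by omega))
  have hs2 : Summable (fun k : ℕ => ((k:ℝ) ^ 2)⁻¹) := by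
    have h := Real.summable_one_div_nat_pow.2 (show 1 < 2 by norm_num)
    simpa [one_div] using h
  exact (summable_nat_add_iff N).2 hs2
/-- exp quadratic remainder bound: for `0 ≤ x`, `exp x - 1 - x ≤ x^2 * exp x`. -/
lemma zrp11_exp_remainder {x : ℝ} (hx : 0 ≤ x) :
    Real.exp x - 1 - x ≤ x ^ 2 * Real.exp x := by
  have h1 : 1 - x ≤ Real.exp (-x) := by have := Real.add_one_le_exp (-x); linarith
  have h2 : Real.exp x * Real.exp (-x) = 1 := by rw [← Real.exp_add]; simp
  nlinarith [Real.exp_pos x, mul_le_mul_of_nonneg_left h1 (Real.exp_pos x).le]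

/-- summability of `k^p * w k` -/
lemma zrp11_summable_S {b γ : ℝ} (hγ0 : 0 < γ) (hγ1 : γ < 1) (hb : 0 < b) (p : ℕ) :
    Summable (fun k : ℕ => (k:ℝ) ^ p * zrpW b γ k) := by
  obtain ⟨B, hB0, hWB⟩ := zrp11_w_bound hγ0 hγ1 hb (β := b/2) (by linarith) (by linarith)
  have hc : (0:ℝ) < b/2/(1-γ) := by
    have : (0:ℝ) < 1 - γ := by linarith
    positivity
  apply Summable.of_nonneg_of_le
    (fun k => mul_nonneg (by positivity) (zrp11_w_pos hb k).le)
  · intro k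
    calc (k:ℝ) ^ p * zrpW b γ k
        ≤ (k:ℝ) ^ p * (B * Real.exp (-(b/2/(1-γ)) * (k:ℝ) ^ (1 - γ))) := by
          apply mul_le_mul_of_nonneg_left (hWB k) (by positivity)
      _ = B * ((k:ℝ) ^ p * Real.exp (-((b/2/(1-γ)) * (k:ℝ) ^ (1 - γ)))) := by
          rw [neg_mul]; ring
  · exact (zrp11_summable hγ0 hγ1 p hc).mul_left B

set_option maxHeartbeats 1000000 in
lemma zrp11_core {b γ : ℝ} (hγ0 : 0 < γ) (hγ1 : γ < 1) (hb : 0 < b)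
    (m : ℕ → ℕ) (μ : ℕ → ℝ) (C : ℝ)
    (hmpos : ∀ n, 0 < m n) (hμpos : ∀ n, 0 < μ n)
    (hm : Tendsto m atTop atTop) (hμ : Tendsto μ atTop (nhds 0))
    (hC : Tendsto (fun n => (m n : ℝ) ^ γ * μ n) atTop (nhds C))
    (hC0 : 0 < C) (hCb : C < b / (1 - γ)) (j : ℕ) :
    Tendsto (fun n =>
      ((∑ k ∈ Finset.range (m n + 1), (k:ℝ) ^ j * zrpW b γ k * Real.exp (μ n * k))
        - (∑' k : ℕ, (k:ℝ) ^ j * zrpW b γ k)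
        - μ n * (∑' k : ℕ, (k:ℝ) ^ (j+1) * zrpW b γ k)) / μ n) atTop (nhds 0) := by
  have hγ' : (0:ℝ) < 1 - γ := by linarith
  set δ : ℝ := (C + b / (1 - γ)) / 2 with hδdef
  have hδC : C < δ := by rw [hδdef]; linarith
  have hδlt : δ * (1 - γ) < b := by
    rw [hδdef]
    have : C * (1 - γ) < b := by
      calc C * (1 - γ) < (b / (1 - γ)) * (1 - γ) := by
            exact mul_lt_mul_of_pos_right hCb hγ'
        _ = b := by field_simp
    have h2 : (b / (1 - γ)) * (1 - γ) = b := by field_simp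
    nlinarith [this, h2]
  have hδ0 : 0 < δ := by rw [hδdef]; positivity
  set β : ℝ := (δ * (1 - γ) + b) / 2 with hβdef
  have hβb : β < b := by rw [hβdef]; linarith
  have hβ0 : 0 < β := by rw [hβdef]; nlinarith
  set c : ℝ := β / (1 - γ) with hcdef
  have hc0 : 0 < c := by rw [hcdef]; positivity
  have hcδ : δ < c := by
    rw [hcdef, lt_div_iff₀ hγ']; rw [hβdef]; nlinarith
  obtain ⟨B, hB0, hWB⟩ := zrp11_w_bound hγ0 hγ1 hb hβ0 hβb
  rw [← hcdef] at hWB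
  -- summability facts
  have hSsum : ∀ p : ℕ, Summable (fun k : ℕ => (k:ℝ) ^ p * zrpW b γ k) :=
    fun p => zrp11_summable_S hγ0 hγ1 hb p
  have hwpos := zrp11_w_pos (b := b) (γ := γ) hb
  -- abbreviations
  set S : ℕ → ℝ := fun p => ∑' k : ℕ, (k:ℝ) ^ p * zrpW b γ k with hSdef
  set P : ℕ → ℕ → ℝ := fun p n => ∑ k ∈ Finset.range (m n + 1), (k:ℝ) ^ p * zrpW b γ k
    with hPdef
  set R : ℕ → ℝ := fun n => ∑ k ∈ Finset.range (m n + 1),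
    (k:ℝ) ^ j * zrpW b γ k * (Real.exp (μ n * k) - 1 - μ n * k) with hRdef
  -- identity
  have hident : ∀ n, (∑ k ∈ Finset.range (m n + 1), (k:ℝ) ^ j * zrpW b γ k *
      Real.exp (μ n * k)) = P j n + μ n * P (j+1) n + R n := by
    intro n
    rw [hPdef, hRdef]
    simp only [Finset.mul_sum, ← Finset.sum_add_distrib]
    apply Finset.sum_congr rfl
    intro k _
    have hp : (k:ℝ) ^ (j+1) = (k:ℝ) ^ j * k := by rw [pow_succ]
    rw [hp]; ring
  -- eventual bounds on μ
  have hev1 : ∀ᶠ n in atTop, μ n * (m n : ℝ) ^ γ ≤ δ := by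
    have := hC.eventually_le_const hδC
    filter_upwards [this] with n hn
    calc μ n * (m n : ℝ) ^ γ = (m n : ℝ) ^ γ * μ n := by ring
      _ ≤ δ := hn
  have hev2 : ∀ᶠ n in atTop, C / 2 ≤ μ n * (m n : ℝ) ^ γ := by
    have := hC.eventually_const_le (show C/2 < C by linarith)
    filter_upwards [this] with n hn
    calc C / 2 ≤ (m n : ℝ) ^ γ * μ n := hn
      _ = μ n * (m n : ℝ) ^ γ := by ring
  have hmR : Tendsto (fun n => (m n : ℝ)) atTop atTop :=
    tendsto_natCast_atTop_atTop.comp hm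
  -- Claim 3 : tails tend to zero
  have hc3 : ∀ p : ℕ, Tendsto (fun n => S p - P p n) atTop (nhds 0) := by
    intro p
    have h1 := (hSsum p).hasSum.tendsto_sum_nat
    have h2 : Tendsto (fun n => m n + 1) atTop atTop :=
      tendsto_atTop_mono (fun n => Nat.le_succ (m n)) hm
    have h3 := h1.comp h2
    have h4 := (tendsto_const_nhds (x := S p) (f := (atTop : Filter ℕ))).sub h3
    have h5 : S p - ∑' (i : ℕ), (i:ℝ) ^ p * zrpW b γ i = 0 := sub_self _
    rw [h5] at h4
    exact h4
  -- tail representation and bound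
  have htail_nonneg : ∀ p n, 0 ≤ S p - P p n := by
    intro p n
    have h := (Summable.sum_add_tsum_nat_add (m n + 1) (hSsum p)).symm
    have h2 : S p - P p n = ∑' k : ℕ, (((k + (m n + 1) : ℕ)):ℝ) ^ p *
        zrpW b γ (k + (m n + 1)) := by
      rw [hSdef, hPdef]
      simp only at h ⊢
      linarith [h]
    rw [h2]
    exact tsum_nonneg fun k => mul_nonneg (by positivity) (hwpos _).le
  -- tail upper bound
  set D : ℝ := B * ∑' k : ℕ, (k:ℝ) ^ j * Real.exp (-(c/2 * (k:ℝ) ^ (1 - γ))) with hDdef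
  have hg2 : Summable (fun k : ℕ => (k:ℝ) ^ j * Real.exp (-(c/2 * (k:ℝ) ^ (1 - γ)))) :=
    zrp11_summable hγ0 hγ1 j (by positivity)
  have hD0 : 0 ≤ D := mul_nonneg hB0.le (tsum_nonneg fun k => by positivity)
  have htail_ub : ∀ n, S j - P j n ≤ Real.exp (-(c/2 * (m n:ℝ) ^ (1 - γ))) * D := by
    intro n
    have h := (Summable.sum_add_tsum_nat_add (m n + 1) (hSsum j)).symm
    have h2 : S j - P j n = ∑' k : ℕ, (((k + (m n + 1) : ℕ)):ℝ) ^ j *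
        zrpW b γ (k + (m n + 1)) := by
      rw [hSdef, hPdef]; simp only at h ⊢; linarith [h]
    rw [h2]
    have hpt : ∀ k : ℕ, (((k + (m n + 1) : ℕ)):ℝ) ^ j * zrpW b γ (k + (m n + 1))
        ≤ Real.exp (-(c/2 * (m n:ℝ) ^ (1 - γ))) *
          (B * ((((k + (m n + 1) : ℕ)):ℝ) ^ j *
            Real.exp (-(c/2 * (((k + (m n + 1) : ℕ)):ℝ) ^ (1 - γ))))) := by
      intro k
      set k' : ℕ := k + (m n + 1) with hk'def
      have hk'm : (m n : ℝ) ≤ (k' : ℝ) := by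
        have : m n ≤ k' := by omega
        exact_mod_cast this
      have hk'r : (m n : ℝ) ^ (1-γ) ≤ (k' : ℝ) ^ (1-γ) :=
        Real.rpow_le_rpow (by positivity) hk'm hγ'.le
      have hsplit : Real.exp (-c * (k':ℝ) ^ (1-γ))
          ≤ Real.exp (-(c/2 * (m n:ℝ) ^ (1-γ))) * Real.exp (-(c/2 * (k':ℝ) ^ (1-γ))) := by
        rw [← Real.exp_add]
        apply Real.exp_le_exp.2
        nlinarith [hk'r]
      calc (k':ℝ) ^ j * zrpW b γ k' ≤ (k':ℝ) ^ j * (B * Real.exp (-c * (k':ℝ) ^ (1-γ))) :=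
            mul_le_mul_of_nonneg_left (hWB k') (by positivity)
        _ ≤ (k':ℝ) ^ j * (B * (Real.exp (-(c/2 * (m n:ℝ) ^ (1-γ))) *
              Real.exp (-(c/2 * (k':ℝ) ^ (1-γ))))) := by
            apply mul_le_mul_of_nonneg_left _ (by positivity)
            exact mul_le_mul_of_nonneg_left hsplit hB0.le
        _ = Real.exp (-(c/2 * (m n:ℝ) ^ (1-γ))) * (B * ((k':ℝ) ^ j *
              Real.exp (-(c/2 * (k':ℝ) ^ (1-γ))))) := by ring
    have hsum1 : Summable (fun k : ℕ => (((k + (m n + 1) : ℕ)):ℝ) ^ j *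
        zrpW b γ (k + (m n + 1))) := by
      have := (summable_nat_add_iff (f := fun k : ℕ => (k:ℝ) ^ j * zrpW b γ k)
        (m n + 1)).2 (hSsum j)
      exact this
    have hsum2 : Summable (fun k : ℕ => Real.exp (-(c/2 * (m n:ℝ) ^ (1 - γ))) *
        (B * ((((k + (m n + 1) : ℕ)):ℝ) ^ j *
          Real.exp (-(c/2 * (((k + (m n + 1) : ℕ)):ℝ) ^ (1 - γ)))))) := by
      have h5 := (summable_nat_add_iff (f := fun k : ℕ => (k:ℝ) ^ j *
        Real.exp (-(c/2 * (k:ℝ) ^ (1 - γ)))) (m n + 1)).2 hg2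
      exact (h5.mul_left B).mul_left _
    have htt : (∑' k : ℕ, (((k + (m n + 1) : ℕ)):ℝ) ^ j *
          Real.exp (-(c/2 * (((k + (m n + 1) : ℕ)):ℝ) ^ (1 - γ))))
        ≤ ∑' k : ℕ, (k:ℝ) ^ j * Real.exp (-(c/2 * (k:ℝ) ^ (1 - γ))) := by
      have h6 := Summable.sum_add_tsum_nat_add (f := fun k : ℕ => (k:ℝ) ^ j *
        Real.exp (-(c/2 * (k:ℝ) ^ (1 - γ)))) (m n + 1) hg2
      have h7 : 0 ≤ ∑ i ∈ Finset.range (m n + 1), (i:ℝ) ^ j *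
          Real.exp (-(c/2 * (i:ℝ) ^ (1 - γ))) :=
        Finset.sum_nonneg fun i _ => by positivity
      linarith
    calc (∑' k : ℕ, (((k + (m n + 1) : ℕ)):ℝ) ^ j * zrpW b γ (k + (m n + 1)))
        ≤ ∑' k : ℕ, Real.exp (-(c/2 * (m n:ℝ) ^ (1 - γ))) *
            (B * ((((k + (m n + 1) : ℕ)):ℝ) ^ j *
              Real.exp (-(c/2 * (((k + (m n + 1) : ℕ)):ℝ) ^ (1 - γ))))) :=
          Summable.tsum_le_tsum hpt hsum1 hsum2
      _ = Real.exp (-(c/2 * (m n:ℝ) ^ (1 - γ))) * (B * ∑' k : ℕ,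
            (((k + (m n + 1) : ℕ)):ℝ) ^ j *
              Real.exp (-(c/2 * (((k + (m n + 1) : ℕ)):ℝ) ^ (1 - γ)))) := by
          rw [tsum_mul_left, tsum_mul_left]
      _ ≤ Real.exp (-(c/2 * (m n:ℝ) ^ (1 - γ))) * (B * ∑' k : ℕ,
            (k:ℝ) ^ j * Real.exp (-(c/2 * (k:ℝ) ^ (1 - γ)))) := by
          apply mul_le_mul_of_nonneg_left _ (Real.exp_pos _).le
          exact mul_le_mul_of_nonneg_left htt hB0.le
      _ = Real.exp (-(c/2 * (m n:ℝ) ^ (1 - γ))) * D := by rw [hDdef]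
  -- Claim 2
  have hc2 : Tendsto (fun n => (S j - P j n) / μ n) atTop (nhds 0) := by
    have hub : Tendsto (fun n => 2 / C * ((m n:ℝ) ^ γ *
        Real.exp (-(c/2 * (m n:ℝ) ^ (1 - γ)))) * D) atTop (nhds 0) := by
      have h0 := (zrp11_tendsto_rpow_exp hγ1 γ (show (0:ℝ) < c/2 by positivity)).comp hmR
      have h1 := (h0.const_mul (2 / C)).mul_const D
      simpa using h1
    apply tendsto_of_tendsto_of_tendsto_of_le_of_le' tendsto_const_nhds hub
    · filter_upwards with n
      exact div_nonneg (htail_nonneg j n) (hμpos n).le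
    · filter_upwards [hev2] with n hn
      have hμn := hμpos n
      have hmγ : (0:ℝ) < (m n:ℝ) ^ γ :=
        Real.rpow_pos_of_pos (by exact_mod_cast hmpos n) γ
      have hinv : 1 / μ n ≤ 2 / C * (m n:ℝ) ^ γ := by
        rw [div_le_iff₀ hμn]
        have h8 := mul_le_mul_of_nonneg_left hn (show (0:ℝ) ≤ 2/C by positivity)
        have h9 : 2 / C * (C / 2) = 1 := by field_simp
        nlinarith [h8, h9]
      have hED : 0 ≤ Real.exp (-(c/2 * (m n:ℝ) ^ (1 - γ))) * D :=
        mul_nonneg (Real.exp_pos _).le hD0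
      calc (S j - P j n) / μ n
          ≤ (Real.exp (-(c/2 * (m n:ℝ) ^ (1 - γ))) * D) / μ n := by
            gcongr
            exact htail_ub n
        _ = (Real.exp (-(c/2 * (m n:ℝ) ^ (1 - γ))) * D) * (1 / μ n) := by ring
        _ ≤ (Real.exp (-(c/2 * (m n:ℝ) ^ (1 - γ))) * D) * (2 / C * (m n:ℝ) ^ γ) :=
            mul_le_mul_of_nonneg_left hinv hED
        _ = 2 / C * ((m n:ℝ) ^ γ * Real.exp (-(c/2 * (m n:ℝ) ^ (1 - γ)))) * D := by ring
  -- Claim 1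
  set E : ℝ := B * ∑' k : ℕ, (k:ℝ) ^ (j+2) * Real.exp (-((c - δ) * (k:ℝ) ^ (1 - γ)))
    with hEdef
  have hgE : Summable (fun k : ℕ => (k:ℝ) ^ (j+2) *
      Real.exp (-((c - δ) * (k:ℝ) ^ (1 - γ)))) :=
    zrp11_summable hγ0 hγ1 (j+2) (by linarith)
  have hE0 : 0 ≤ E := mul_nonneg hB0.le (tsum_nonneg fun k => by positivity)
  have hR_nonneg : ∀ n, 0 ≤ R n := by
    intro n; rw [hRdef]
    apply Finset.sum_nonneg; intro k _
    have h1 : 0 ≤ Real.exp (μ n * k) - 1 - μ n * k := by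
      have := Real.add_one_le_exp (μ n * k); linarith
    exact mul_nonneg (mul_nonneg (by positivity) (hwpos k).le) h1
  have hR_ub : ∀ᶠ n in atTop, R n ≤ μ n ^ 2 * E := by
    filter_upwards [hev1] with n hn
    rw [hRdef]
    have hpt : ∀ k ∈ Finset.range (m n + 1),
        (k:ℝ) ^ j * zrpW b γ k * (Real.exp (μ n * k) - 1 - μ n * k)
        ≤ μ n ^ 2 * (B * ((k:ℝ) ^ (j+2) *
            Real.exp (-((c - δ) * (k:ℝ) ^ (1-γ))))) := by
      intro k hk
      have hkm : k ≤ m n := by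
        have := Finset.mem_range.1 hk; omega
      have hμn := hμpos n
      have hμk : (0:ℝ) ≤ μ n * k := by positivity
      have hμkb : μ n * (k:ℝ) ≤ δ * (k:ℝ) ^ (1-γ) := by
        rcases Nat.eq_zero_or_pos k with rfl | hkpos
        · simp [Real.zero_rpow (by linarith : (1:ℝ) - γ ≠ 0)]
        · have hk0 : (0:ℝ) < k := by exact_mod_cast hkpos
          have h1 : (k:ℝ) = (k:ℝ) ^ γ * (k:ℝ) ^ (1-γ) := by
            rw [← Real.rpow_add hk0]; norm_num
          have h2 : (k:ℝ) ^ γ ≤ (m n:ℝ) ^ γ :=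
            Real.rpow_le_rpow (by positivity) (by exact_mod_cast hkm) hγ0.le
          calc μ n * (k:ℝ) = μ n * ((k:ℝ) ^ γ * (k:ℝ) ^ (1-γ)) := by rw [← h1]
            _ ≤ μ n * ((m n:ℝ) ^ γ * (k:ℝ) ^ (1-γ)) := by
                apply mul_le_mul_of_nonneg_left _ hμn.le
                exact mul_le_mul_of_nonneg_right h2 (by positivity)
            _ = μ n * (m n:ℝ) ^ γ * (k:ℝ) ^ (1-γ) := by ring
            _ ≤ δ * (k:ℝ) ^ (1-γ) := mul_le_mul_of_nonneg_right hn (by positivity)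
      have hrem := zrp11_exp_remainder hμk
      have hexpk : Real.exp (μ n * k) ≤ Real.exp (δ * (k:ℝ) ^ (1-γ)) :=
        Real.exp_le_exp.2 hμkb
      have h3 : Real.exp (μ n * k) - 1 - μ n * k
          ≤ (μ n * k) ^ 2 * Real.exp (δ * (k:ℝ) ^ (1-γ)) := by
        calc Real.exp (μ n * k) - 1 - μ n * k
            ≤ (μ n * k) ^ 2 * Real.exp (μ n * k) := hrem
          _ ≤ (μ n * k) ^ 2 * Real.exp (δ * (k:ℝ) ^ (1-γ)) :=
              mul_le_mul_of_nonneg_left hexpk (by positivity)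
      have hWk := hWB k
      calc (k:ℝ) ^ j * zrpW b γ k * (Real.exp (μ n * k) - 1 - μ n * k)
          ≤ (k:ℝ) ^ j * zrpW b γ k *
              ((μ n * k) ^ 2 * Real.exp (δ * (k:ℝ) ^ (1-γ))) :=
            mul_le_mul_of_nonneg_left h3 (mul_nonneg (by positivity) (hwpos k).le)
        _ ≤ (k:ℝ) ^ j * (B * Real.exp (-c * (k:ℝ) ^ (1-γ))) *
              ((μ n * k) ^ 2 * Real.exp (δ * (k:ℝ) ^ (1-γ))) := by
            apply mul_le_mul_of_nonneg_right
              (mul_le_mul_of_nonneg_left hWk (by positivity)) (by positivity)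
        _ = μ n ^ 2 * (B * ((k:ℝ) ^ j * (k:ℝ) ^ 2 *
              (Real.exp (-c * (k:ℝ) ^ (1-γ)) * Real.exp (δ * (k:ℝ) ^ (1-γ))))) := by
            ring
        _ = μ n ^ 2 * (B * ((k:ℝ) ^ (j+2) *
              Real.exp (-((c - δ) * (k:ℝ) ^ (1-γ))))) := by
            rw [← Real.exp_add,
              show -c * (k:ℝ) ^ (1-γ) + δ * (k:ℝ) ^ (1-γ)
                = -((c - δ) * (k:ℝ) ^ (1-γ)) by ring,
              pow_add]
    calc (∑ k ∈ Finset.range (m n + 1),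
          (k:ℝ) ^ j * zrpW b γ k * (Real.exp (μ n * k) - 1 - μ n * k))
        ≤ ∑ k ∈ Finset.range (m n + 1), μ n ^ 2 * (B * ((k:ℝ) ^ (j+2) *
            Real.exp (-((c - δ) * (k:ℝ) ^ (1-γ))))) := Finset.sum_le_sum hpt
      _ = μ n ^ 2 * B * ∑ k ∈ Finset.range (m n + 1), (k:ℝ) ^ (j+2) *
            Real.exp (-((c - δ) * (k:ℝ) ^ (1-γ))) := by
          rw [Finset.mul_sum]
          apply Finset.sum_congr rfl
          intro k _; ring
      _ ≤ μ n ^ 2 * B * ∑' k : ℕ, (k:ℝ) ^ (j+2) *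
            Real.exp (-((c - δ) * (k:ℝ) ^ (1-γ))) := by
          apply mul_le_mul_of_nonneg_left
            (Summable.sum_le_tsum _ (fun k _ => by positivity) hgE) (by positivity)
      _ = μ n ^ 2 * E := by rw [hEdef]; ring
  have hc1 : Tendsto (fun n => R n / μ n) atTop (nhds 0) := by
    have hub : Tendsto (fun n => μ n * E) atTop (nhds 0) := by
      simpa using hμ.mul_const E
    apply tendsto_of_tendsto_of_tendsto_of_le_of_le' tendsto_const_nhds hub
    · filter_upwards with n
      exact div_nonneg (hR_nonneg n) (hμpos n).le
    · filter_upwards [hR_ub] with n hn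
      rw [div_le_iff₀ (hμpos n)]
      calc R n ≤ μ n ^ 2 * E := hn
        _ = μ n * E * μ n := by ring
  -- conclude
  have hfinal : Tendsto (fun n => R n / μ n - (S j - P j n) / μ n -
      (S (j+1) - P (j+1) n)) atTop (nhds 0) := by
    have := (hc1.sub hc2).sub (hc3 (j+1))
    simpa using this
  apply hfinal.congr
  intro n
  have hμn : μ n ≠ 0 := (hμpos n).ne'
  rw [hident n]
  simp only [hSdef, hPdef]
  field_simp
  ring


set_option maxHeartbeats 1000000 in
/-- Let `M_j = (Σ_k k^j·w(k)) / z(1)`. Under the cut-off scaling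
`m_n → ∞`, `μ_n → 0⁺`, `m_n^γ·μ_n → C` with `0 < C < b/(1−γ)`, the `i`-th moment of the
cut-off measure `ν_{e^{μ_n}, m_n}` expands as `M_i + μ_n·(M_{i+1} − M_i·M_1) + o(μ_n)`. -/
theorem cutoff_moment_expansion (b γ : ℝ) (hγ0 : 0 < γ) (hγ1 : γ < 1) (hb : 0 < b)
    (i : ℕ) (M : ℕ → ℝ)
    (hM : ∀ j, M j = (∑' k : ℕ, (k : ℝ) ^ j * zrpW b γ k) / zrpZfun b γ 1)
    (m : ℕ → ℕ) (μ : ℕ → ℝ) (C : ℝ)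
    (hmpos : ∀ n, 0 < m n) (hμpos : ∀ n, 0 < μ n)
    (hm : Tendsto m atTop atTop) (hμ : Tendsto μ atTop (nhds 0))
    (hC : Tendsto (fun n => (m n : ℝ) ^ γ * μ n) atTop (nhds C))
    (hC0 : 0 < C) (hCb : C < b / (1 - γ)) :
    Tendsto
      (fun n =>
        ((∑ k ∈ Finset.range (m n + 1), (k : ℝ) ^ i * zrpW b γ k * Real.exp (μ n * k)) /
            zrpZtrunc b γ (m n) (Real.exp (μ n))
          - M i - μ n * (M (i + 1) - M i * M 1)) / μ n) atTop (nhds 0) := by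
  have hSsum : ∀ p : ℕ, Summable (fun k : ℕ => (k:ℝ) ^ p * zrpW b γ k) :=
    fun p => zrp11_summable_S hγ0 hγ1 hb p
  set S : ℕ → ℝ := fun p => ∑' k : ℕ, (k:ℝ) ^ p * zrpW b γ k with hSdef
  have hwpos := zrp11_w_pos (b := b) (γ := γ) hb
  -- z(1) = S 0
  have hZ1 : zrpZfun b γ 1 = S 0 := by
    rw [zrpZfun, hSdef]
    apply tsum_congr; intro k; rw [one_pow, pow_zero, one_mul, mul_one]
  -- S 0 ≥ 1 > 0
  have hS0 : (1:ℝ) ≤ S 0 := by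
    have h1 := Summable.le_tsum (hSsum 0) 0
      (fun k _ => mul_nonneg (by positivity) (hwpos k).le)
    have h2 : ((0:ℕ):ℝ) ^ 0 * zrpW b γ 0 = 1 := by
      simp [zrpW]
    rw [hSdef]
    rw [h2] at h1
    exact h1
  have hS0pos : 0 < S 0 := by linarith
  have hS0ne : S 0 ≠ 0 := ne_of_gt hS0pos
  -- truncated partition function as exp-sum
  have hZteq : ∀ n, zrpZtrunc b γ (m n) (Real.exp (μ n))
      = ∑ k ∈ Finset.range (m n + 1), (k:ℝ) ^ 0 * zrpW b γ k * Real.exp (μ n * k) := by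
    intro n
    rw [zrpZtrunc]
    apply Finset.sum_congr rfl
    intro k _
    rw [pow_zero, one_mul, ← Real.exp_nat_mul, mul_comm (k:ℝ) (μ n)]
  have hZtpos : ∀ n, 0 < zrpZtrunc b γ (m n) (Real.exp (μ n)) := by
    intro n
    rw [zrpZtrunc]
    have h0 : (0:ℕ) ∈ Finset.range (m n + 1) := by simp
    have h1 : zrpW b γ 0 * Real.exp (μ n) ^ (0:ℕ) = 1 := by simp [zrpW]
    calc (0:ℝ) < 1 := one_pos
      _ = zrpW b γ 0 * Real.exp (μ n) ^ (0:ℕ) := h1.symm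
      _ ≤ _ := Finset.single_le_sum
          (fun k _ => mul_nonneg (hwpos k).le (by positivity)) h0
  -- the two expansions
  set A : ℕ → ℝ := fun n => ∑ k ∈ Finset.range (m n + 1),
    (k:ℝ) ^ i * zrpW b γ k * Real.exp (μ n * k) with hAdef
  set Zt : ℕ → ℝ := fun n => zrpZtrunc b γ (m n) (Real.exp (μ n)) with hZtdef
  set u : ℕ → ℝ := fun n => (A n - S i - μ n * S (i+1)) / μ n with hudef
  set v : ℕ → ℝ := fun n => (Zt n - S 0 - μ n * S 1) / μ n with hvdef
  have hu : Tendsto u atTop (nhds 0) :=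
    zrp11_core hγ0 hγ1 hb m μ C hmpos hμpos hm hμ hC hC0 hCb i
  have hv : Tendsto v atTop (nhds 0) := by
    have h1 := zrp11_core hγ0 hγ1 hb m μ C hmpos hμpos hm hμ hC hC0 hCb 0
    apply h1.congr
    intro n
    rw [hvdef]
    simp only [hSdef, hZtdef]
    rw [hZteq n]
  -- basic relations
  have hArel : ∀ n, A n = S i + μ n * S (i+1) + μ n * u n := by
    intro n
    have hμn : μ n ≠ 0 := (hμpos n).ne'
    rw [hudef]
    field_simp
    ring
  have hZtrel : ∀ n, Zt n = S 0 + μ n * S 1 + μ n * v n := by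
    intro n
    have hμn : μ n ≠ 0 := (hμpos n).ne'
    rw [hvdef]
    field_simp
    ring
  -- moments in terms of S
  have hMi : M i * S 0 = S i := by rw [hM i, hZ1, div_mul_cancel₀ _ hS0ne]
  have hM1 : M 1 * S 0 = S 1 := by rw [hM 1, hZ1, div_mul_cancel₀ _ hS0ne]
  have hMi1 : M (i+1) * S 0 = S (i+1) := by rw [hM (i+1), hZ1, div_mul_cancel₀ _ hS0ne]
  set Dd : ℝ := S (i+1) - M i * S 1 with hDddef
  -- limit of Zt
  have hZtlim : Tendsto Zt atTop (nhds (S 0)) := by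
    have h1 : Tendsto (fun n => S 0 + μ n * S 1 + μ n * v n) atTop
        (nhds (S 0 + 0 * S 1 + 0 * 0)) :=
      ((tendsto_const_nhds.add (hμ.mul_const (S 1)))).add (hμ.mul hv)
    rw [show S 0 + 0 * S 1 + 0 * 0 = S 0 by ring] at h1
    exact h1.congr fun n => (hZtrel n).symm
  -- main limit
  have hnum : Tendsto (fun n => Dd + u n - M i * v n) atTop (nhds Dd) := by
    have h1 : Tendsto (fun n => Dd + u n - M i * v n) atTop
        (nhds (Dd + 0 - M i * 0)) :=
      (tendsto_const_nhds.add hu).sub (hv.const_mul (M i))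
    rw [show Dd + 0 - M i * 0 = Dd by ring] at h1
    exact h1
  have hG : Tendsto (fun n => (Dd + u n - M i * v n) / Zt n - Dd / S 0) atTop
      (nhds 0) := by
    have h1 := (hnum.div hZtlim hS0ne).sub (tendsto_const_nhds (x := Dd / S 0))
    rw [sub_self] at h1
    exact h1
  apply hG.congr
  intro n
  have hμn : μ n ≠ 0 := (hμpos n).ne'
  have hZtn : Zt n ≠ 0 := (hZtpos n).ne'
  -- pointwise identity
  have e1 : A n / Zt n - M i = μ n * ((Dd + u n - M i * v n) / Zt n) := by
    rw [div_sub' hZtn, mul_div_assoc']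
    congr 1
    have hA' := hArel n
    have hZt' := hZtrel n
    linear_combination hA' - M i * hZt' - hMi
  have e2 : M (i+1) - M i * M 1 = Dd / S 0 := by
    rw [hDddef]
    field_simp
    linear_combination hMi1 - M i * hM1
  have e3 : A n / Zt n - M i - μ n * (M (i+1) - M i * M 1)
      = μ n * ((Dd + u n - M i * v n) / Zt n - Dd / S 0) := by
    rw [e2, show A n / Zt n - M i - μ n * (Dd / S 0)
        = (A n / Zt n - M i) - μ n * (Dd / S 0) from rfl, e1]
    ring
  show (Dd + u n - M i * v n) / Zt n - Dd / S 0
      = (A n / Zt n - M i - μ n * (M (i+1) - M i * M 1)) / μ n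
  rw [e3]
  exact (mul_div_cancel_left₀ _ hμn).symm
end

section
/- Let σ² > 0 be the critical variance and set c_0 = ((1+γ)/γ)·(σ²·γ·b)^{1/(1+γ)}. For δρ > 0, consider the current matching equation r/σ² = b/(δρ−r)^γ for r ∈ (0, δρ). If δρ < c_0 the equation has no solution in (0, δρ); if δρ = c_0 it has exactly one solution; and if δρ > c_0 it has exactly two solutions. -/
open Filter Topology

/-- with `σ² = σ_c² > 0` and `c₀ = ((1+γ)/γ)·(σ²γb)^{1/(1+γ)}`, the current
matching equation `r/σ² = b/(δρ−r)^γ` on `(0,δρ)` has no solution if `δρ < c₀`, exactly one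
if `δρ = c₀`, and exactly two if `δρ > c₀`. -/
theorem current_matching_solutions (b γ : ℝ) (hγ0 : 0 < γ) (hγ1 : γ < 1) (hb : 0 < b)
    (hσ : 0 < zrpSigmaSq b γ) (δρ : ℝ) (hδρ : 0 < δρ)
    (c₀ : ℝ) (hc₀ : c₀ = (1 + γ) / γ * (zrpSigmaSq b γ * γ * b) ^ (1 / (1 + γ))) :
    (δρ < c₀ → ¬ ∃ r, r ∈ Set.Ioo (0 : ℝ) δρ ∧
      r / zrpSigmaSq b γ = b / (δρ - r) ^ γ) ∧
    (δρ = c₀ → ∃! r, r ∈ Set.Ioo (0 : ℝ) δρ ∧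
      r / zrpSigmaSq b γ = b / (δρ - r) ^ γ) ∧
    (c₀ < δρ → ∃ r₁ r₂ : ℝ, r₁ ≠ r₂ ∧
      r₁ ∈ Set.Ioo (0 : ℝ) δρ ∧ r₁ / zrpSigmaSq b γ = b / (δρ - r₁) ^ γ ∧
      r₂ ∈ Set.Ioo (0 : ℝ) δρ ∧ r₂ / zrpSigmaSq b γ = b / (δρ - r₂) ^ γ ∧
      ∀ r ∈ Set.Ioo (0 : ℝ) δρ,
        r / zrpSigmaSq b γ = b / (δρ - r) ^ γ → r = r₁ ∨ r = r₂) := by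
  have hγ1' : (0:ℝ) < 1 + γ := by linarith
  set σ2 := zrpSigmaSq b γ with hσ2
  set A := σ2 * b with hAdef
  have hA : 0 < A := mul_pos hσ hb
  set p := δρ / (1 + γ) with hp
  have hp0 : 0 < p := div_pos hδρ hγ1'
  have hpδ : p < δρ := by
    rw [hp, div_lt_iff₀ hγ1']; nlinarith
  set h : ℝ → ℝ := fun r => r * (δρ - r) ^ γ with hh
  -- continuity of h
  have hcont : Continuous h := by
    apply continuous_id.mul
    rw [continuous_iff_continuousAt]
    intro r
    have h1 : ContinuousAt (fun x : ℝ => x ^ γ) (δρ - r) :=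
      Real.continuousAt_rpow_const _ _ (Or.inr hγ0.le)
    exact h1.comp (continuous_const.sub continuous_id).continuousAt
  -- derivative
  have hderiv : ∀ r ∈ Set.Ioo (0:ℝ) δρ,
      HasDerivAt h ((δρ - r) ^ (γ - 1) * (δρ - (1+γ)*r)) r := by
    intro r hr
    have hbase : 0 < δρ - r := by linarith [hr.2]
    have h1 : HasDerivAt (fun x : ℝ => δρ - x) (-1) r := by
      simpa using (hasDerivAt_id r).const_sub δρ
    have h2 : HasDerivAt (fun x : ℝ => (δρ - x) ^ γ)
        (γ * (δρ - r) ^ (γ - 1) * (-1)) r :=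
      (Real.hasDerivAt_rpow_const (x := δρ - r) (p := γ) (Or.inl hbase.ne')).comp r h1
    have h3 := (hasDerivAt_id r).mul h2
    have hsplit : (δρ - r) ^ γ = (δρ - r) ^ (γ - 1) * (δρ - r) := by
      rw [← Real.rpow_add_one hbase.ne' (γ-1)]; ring_nf
    convert h3 using 1
    · rfl
    · rfl
    · rfl
    simp only [id_eq]
    rw [hsplit]; ring
  -- monotonicity
  have hmono : StrictMonoOn h (Set.Icc 0 p) := by
    apply strictMonoOn_of_deriv_pos (convex_Icc 0 p) hcont.continuousOn
    intro r hr
    rw [interior_Icc] at hr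
    have hr' : r ∈ Set.Ioo (0:ℝ) δρ := ⟨hr.1, lt_trans hr.2 hpδ⟩
    rw [(hderiv r hr').deriv]
    have hbase : 0 < δρ - r := by linarith [hr'.2]
    apply mul_pos (Real.rpow_pos_of_pos hbase _)
    have h2 := hr.2
    rw [hp, lt_div_iff₀ hγ1'] at h2
    nlinarith
  have hanti : StrictAntiOn h (Set.Icc p δρ) := by
    apply strictAntiOn_of_deriv_neg (convex_Icc p δρ) hcont.continuousOn
    intro r hr
    rw [interior_Icc] at hr
    have hr' : r ∈ Set.Ioo (0:ℝ) δρ := ⟨lt_trans hp0 hr.1, hr.2⟩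
    rw [(hderiv r hr').deriv]
    have hbase : 0 < δρ - r := by linarith [hr'.2]
    apply mul_neg_of_pos_of_neg (Real.rpow_pos_of_pos hbase _)
    have h2 := hr.1
    rw [hp, div_lt_iff₀ hγ1'] at h2
    nlinarith
  have h0 : h 0 = 0 := by simp [hh]
  have hδz : h δρ = 0 := by simp [hh, Real.zero_rpow hγ0.ne']
  set M := h p with hM
  -- M = (δρ/c₀)^(1+γ) * A
  have hγne : γ ≠ 0 := hγ0.ne'
  have hc0pos : 0 < c₀ := by
    rw [hc₀]
    exact mul_pos (div_pos hγ1' hγ0)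
      (Real.rpow_pos_of_pos (mul_pos (mul_pos hσ hγ0) hb) _)
  have hc0pow : c₀ ^ (1+γ) = (1+γ) ^ (1+γ) / γ ^ (1+γ) * (σ2 * γ * b) := by
    rw [hc₀, Real.mul_rpow (by positivity) (by positivity),
      Real.div_rpow (by positivity) hγ0.le, ← Real.rpow_mul (by positivity),
      one_div, inv_mul_cancel₀ hγ1'.ne', Real.rpow_one]
  have hdp : δρ - p = δρ * γ / (1+γ) := by
    rw [hp]; field_simp; ring
  have hMval : M = δρ ^ (1+γ) * γ ^ γ / (1+γ) ^ (1+γ) := by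
    have e1 : (δρ * γ / (1+γ)) ^ γ = δρ ^ γ * γ ^ γ / (1+γ) ^ γ := by
      rw [Real.div_rpow (by positivity) hγ1'.le,
        Real.mul_rpow hδρ.le hγ0.le]
    have e2 : δρ ^ (1+γ) = δρ * δρ ^ γ := by
      rw [Real.rpow_add hδρ, Real.rpow_one]
    have e3 : (1+γ) ^ (1+γ) = (1+γ) * (1+γ) ^ γ := by
      rw [Real.rpow_add hγ1', Real.rpow_one]
    rw [hM, hh]
    simp only
    rw [hdp, e1, e2, e3, hp]
    have h4 : (0:ℝ) < (1+γ) ^ γ := Real.rpow_pos_of_pos hγ1' _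
    field_simp
  have hMA : M * c₀ ^ (1+γ) = δρ ^ (1+γ) * A := by
    rw [hMval, hc0pow]
    have e3 : γ ^ (1+γ) = γ * γ ^ γ := by
      rw [Real.rpow_add hγ0, Real.rpow_one]
    rw [e3, hAdef]
    have h4 : (0:ℝ) < (1+γ) ^ (1+γ) := Real.rpow_pos_of_pos hγ1' _
    have h5 : (0:ℝ) < γ ^ γ := Real.rpow_pos_of_pos hγ0 _
    field_simp
  have hMeq : M = (δρ / c₀) ^ (1+γ) * A := by
    rw [Real.div_rpow hδρ.le hc0pos.le]
    have h4 : (0:ℝ) < c₀ ^ (1+γ) := Real.rpow_pos_of_pos hc0pos _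
    field_simp
    linarith [hMA]
  -- equation equivalence
  have heqv : ∀ r ∈ Set.Ioo (0:ℝ) δρ,
      (r / σ2 = b / (δρ - r) ^ γ ↔ h r = A) := by
    intro r hr
    have hbase : 0 < δρ - r := by linarith [hr.2]
    have hrpow : 0 < (δρ - r) ^ γ := Real.rpow_pos_of_pos hbase _
    rw [div_eq_div_iff hσ.ne' hrpow.ne']
    constructor
    · intro he; rw [hh]; simp only; rw [hAdef]; linarith [he]
    · intro he; rw [hh] at he; simp only at he; rw [hAdef] at he; linarith [he]
  -- h r ≤ M on the interval
  have hbound : ∀ r ∈ Set.Ioo (0:ℝ) δρ, h r ≤ M := by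
    intro r hr
    rcases le_total r p with hle | hle
    · exact hmono.monotoneOn ⟨hr.1.le, hle⟩ ⟨hp0.le, le_refl p⟩ hle
    · exact hanti.antitoneOn ⟨le_refl p, hpδ.le⟩ ⟨hle, hr.2.le⟩ hle
  refine ⟨?_, ?_, ?_⟩
  · -- no solution
    intro hlt ⟨r, hr, heq⟩
    have hMlt : M < A := by
      rw [hMeq]
      have : (δρ / c₀) ^ (1+γ) < 1 :=
        Real.rpow_lt_one (by positivity) ((div_lt_one hc0pos).mpr hlt) hγ1'
      nlinarith
    have := (heqv r hr).mp heq
    linarith [hbound r hr]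
  · -- exactly one
    intro heqδ
    have hMA' : M = A := by
      rw [hMeq, heqδ, div_self hc0pos.ne', Real.one_rpow, one_mul]
    refine ⟨p, ⟨⟨hp0, hpδ⟩, (heqv p ⟨hp0, hpδ⟩).mpr hMA'⟩, ?_⟩
    rintro r ⟨hr, heq⟩
    have hrA : h r = A := (heqv r hr).mp heq
    rcases lt_trichotomy r p with hlt | heq' | hgt
    · have := hmono ⟨hr.1.le, hlt.le⟩ ⟨hp0.le, le_refl p⟩ hlt
      rw [hrA, ← hM, hMA'] at this; linarith
    · exact heq'
    · have := hanti ⟨le_refl p, hpδ.le⟩ ⟨hgt.le, hr.2.le⟩ hgt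
      rw [hrA, ← hM, hMA'] at this; linarith
  · -- exactly two
    intro hgt
    have hAM : A < M := by
      rw [hMeq]
      have : (1:ℝ) < (δρ / c₀) ^ (1+γ) :=
        Real.one_lt_rpow ((one_lt_div hc0pos).mpr hgt) hγ1'
      nlinarith
    obtain ⟨r₁, hr₁, hr₁A⟩ : ∃ r₁ ∈ Set.Ioo (0:ℝ) p, h r₁ = A := by
      have := intermediate_value_Ioo hp0.le (hcont.continuousOn (s := Set.Icc 0 p))
      have hmem : A ∈ Set.Ioo (h 0) (h p) := by rw [h0, ← hM]; exact ⟨hA, hAM⟩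
      obtain ⟨r₁, hr₁, hval⟩ := this hmem
      exact ⟨r₁, hr₁, hval⟩
    obtain ⟨r₂, hr₂, hr₂A⟩ : ∃ r₂ ∈ Set.Ioo p δρ, h r₂ = A := by
      have := intermediate_value_Ioo' hpδ.le (hcont.continuousOn (s := Set.Icc p δρ))
      have hmem : A ∈ Set.Ioo (h δρ) (h p) := by rw [hδz, ← hM]; exact ⟨hA, hAM⟩
      obtain ⟨r₂, hr₂, hval⟩ := this hmem
      exact ⟨r₂, hr₂, hval⟩
    have hr₁I : r₁ ∈ Set.Ioo (0:ℝ) δρ := ⟨hr₁.1, lt_trans hr₁.2 hpδ⟩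
    have hr₂I : r₂ ∈ Set.Ioo (0:ℝ) δρ := ⟨lt_trans hp0 hr₂.1, hr₂.2⟩
    refine ⟨r₁, r₂, (lt_trans hr₁.2 hr₂.1).ne, hr₁I, (heqv r₁ hr₁I).mpr hr₁A,
      hr₂I, (heqv r₂ hr₂I).mpr hr₂A, ?_⟩
    intro r hr heq
    have hrA : h r = A := (heqv r hr).mp heq
    have hrnep : r ≠ p := by
      intro hrp
      rw [hrp, ← hM] at hrA
      linarith
    rcases lt_or_gt_of_ne hrnep with hlt | hgt'
    · left
      exact hmono.injOn ⟨hr.1.le, hlt.le⟩ ⟨hr₁.1.le, hr₁.2.le⟩ (by rw [hrA, hr₁A])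
    · right
      exact hanti.injOn ⟨hgt'.le, hr.2.le⟩ ⟨hr₂.1.le, hr₂.2.le⟩ (by rw [hrA, hr₂A])
end

section
/- Let σ² > 0 be the critical variance, c_0 = ((1+γ)/γ)·(σ²·γ·b)^{1/(1+γ)} and δρ_trans = (σ²)^{1/(1+γ)}·(1+γ)·(2γ)^{−γ/(1+γ)}·(b/(1−γ))^{1/(1+γ)}. Then δρ_trans/c_0 = (1/2)·(2/(1−γ))^{1/(1+γ)} > 1; moreover, for δρ = δρ_trans there exists r_0 ∈ (0, δρ) satisfying both the current matching equation r_0/σ² = b/(δρ−r_0)^γ and the equal-depth condition r_0²/(2σ²) + (b/(1−γ))·(δρ−r_0)^{1−γ} = δρ²/(2σ²). -/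
open Filter Topology

/-- with `σ² = σ_c² > 0`, `c₀ = ((1+γ)/γ)·(σ²γb)^{1/(1+γ)}` and
`δρ_trans = (σ²)^{1/(1+γ)}·(1+γ)·(2γ)^{−γ/(1+γ)}·(b/(1−γ))^{1/(1+γ)}`, the ratio
`δρ_trans/c₀ = (1/2)·(2/(1−γ))^{1/(1+γ)} > 1`, and at `δρ = δρ_trans` there exists
`r₀ ∈ (0,δρ)` satisfying the current matching equation and the equal-depth condition. -/
theorem transition_density (b γ : ℝ) (hγ0 : 0 < γ) (hγ1 : γ < 1) (hb : 0 < b)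
    (hσ : 0 < zrpSigmaSq b γ)
    (c₀ δρt : ℝ) (hc₀ : c₀ = (1 + γ) / γ * (zrpSigmaSq b γ * γ * b) ^ (1 / (1 + γ)))
    (hδρt : δρt = (zrpSigmaSq b γ) ^ (1 / (1 + γ)) * (1 + γ) * (2 * γ) ^ (-(γ / (1 + γ))) *
      (b / (1 - γ)) ^ (1 / (1 + γ))) :
    δρt / c₀ = 1 / 2 * (2 / (1 - γ)) ^ (1 / (1 + γ)) ∧
    1 < 1 / 2 * (2 / (1 - γ)) ^ (1 / (1 + γ)) ∧
    ∃ r₀ : ℝ, r₀ ∈ Set.Ioo (0 : ℝ) δρt ∧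
      r₀ / zrpSigmaSq b γ = b / (δρt - r₀) ^ γ ∧
      r₀ ^ 2 / (2 * zrpSigmaSq b γ) + b / (1 - γ) * (δρt - r₀) ^ (1 - γ) =
        δρt ^ 2 / (2 * zrpSigmaSq b γ) := by
  set s := zrpSigmaSq b γ with hsdef
  have h1γ : (0:ℝ) < 1 + γ := by linarith
  have h1γ' : (0:ℝ) < 1 - γ := by linarith
  have h2γ : (0:ℝ) < 2 * γ := by linarith
  set p : ℝ := 1 / (1 + γ) with hp
  have hp0 : 0 < p := by positivity
  have hA : (0:ℝ) < 2 * γ * s * b / (1 - γ) := by positivity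
  set A : ℝ := 2 * γ * s * b / (1 - γ) with hAdef
  set u : ℝ := A ^ p with hudef
  have hu : 0 < u := Real.rpow_pos_of_pos hA p
  have huγ : 0 < u ^ γ := Real.rpow_pos_of_pos hu γ
  have hup : u ^ γ * u = A := by
    calc u ^ γ * u = u ^ γ * u ^ (1:ℝ) := by rw [Real.rpow_one]
      _ = u ^ (γ + 1) := (Real.rpow_add hu γ 1).symm
      _ = A ^ (p * (γ + 1)) := by rw [hudef, ← Real.rpow_mul hA.le]
      _ = A ^ (1:ℝ) := by rw [show p * (γ + 1) = 1 by rw [hp]; field_simp; ring]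
      _ = A := Real.rpow_one A
  set r₀ : ℝ := s * b / u ^ γ with hr₀def
  have e1 : (2*γ:ℝ) ^ (-(γ/(1+γ))) = (2*γ) ^ p / (2*γ) := by
    have h : -(γ/(1+γ)) = p - 1 := by rw [hp]; field_simp; ring
    rw [h, Real.rpow_sub h2γ, Real.rpow_one]
  have e2 : u = (2*γ) ^ p * (s ^ p * (b/(1-γ)) ^ p) := by
    rw [hudef, show A = (2*γ) * (s * (b/(1-γ))) from by rw [hAdef]; ring,
      Real.mul_rpow h2γ.le (by positivity), Real.mul_rpow hσ.le (by positivity)]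
  have hδ : δρt = (1+γ)/(2*γ) * u := by
    rw [hδρt, e1, e2]; ring
  have hkey : (1-γ)/(2*γ) * u = r₀ := by
    rw [hr₀def, eq_div_iff huγ.ne', mul_assoc, mul_comm u (u ^ γ), hup, hAdef]
    field_simp
  have hr₀pos : 0 < r₀ := by rw [hr₀def]; positivity
  have hsum : δρt = u + r₀ := by
    rw [hδ, ← hkey]; field_simp; ring
  have hdiff : δρt - r₀ = u := by rw [hsum]; ring
  have hup' : u ^ γ * u * (1-γ) = 2*γ*s*b := by
    rw [hup, hAdef]; field_simp
  refine ⟨?_, ?_, r₀, ⟨hr₀pos, by linarith [hsum, hu]⟩, ?_, ?_⟩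
  · have e3 : u = (s*γ*b) ^ p * (2/(1-γ)) ^ p := by
      rw [hudef, ← Real.mul_rpow (by positivity) (by positivity)]
      congr 1
      rw [hAdef]; ring
    rw [hδ, hc₀, e3]
    have h1 : (s*γ*b) ^ p ≠ 0 := by positivity
    field_simp
  · have hlog2 : Real.log 2 < 1 := by
      have := Real.log_two_lt_d9; linarith
    have hlog1γ : Real.log (1-γ) ≤ -γ := by
      have := Real.log_le_sub_one_of_pos h1γ'; linarith
    have h2lt : (2:ℝ) < (2/(1-γ)) ^ p := by
      rw [Real.lt_rpow_iff_log_lt (by norm_num) (by positivity),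
        Real.log_div (by norm_num) h1γ'.ne', hp, div_mul_eq_mul_div, lt_div_iff₀ h1γ]
      nlinarith [mul_lt_mul_of_pos_left hlog2 hγ0]
    linarith
  · rw [hdiff, hr₀def]
    field_simp
  · rw [hdiff, hsum]
    have h1mγ : u ^ (1-γ) = u / u ^ γ := by
      rw [Real.rpow_sub hu, Real.rpow_one]
    rw [h1mγ, hr₀def]
    field_simp
    linear_combination (-(u^γ*u)) * hup'
end
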